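/- arXiv:2303.07841 — 2 statements merged into one kernel-verified Lean document; each statement's English description precedes it below -/
import Mathlib

section
/- For the N-qubit W state W_N = (1/√N)(|10⋯0⟩ + |01⋯0⟩ + ⋯ + |00⋯1⟩), N ≥ 2, the quantum state advantage equals Γ_C(|W_N⟩⟨W_N|) = (3N − 2)/N. -/
set_option linter.unusedSectionVars false
set_option linter.unreachableTactic false
set_option linter.unusedTactic false
set_option linter.unusedVariables false
set_option maxHeartbeats 1000000


open Matrix BigOperators
open scoped ComplexOrder

noncomputable section

/-- Commutator of two square matrices. -/
def mComm {d : Type*} [Fintype d] (A B : Matrix d d ℂ) : Matrix d d ℂ := A * B - B * A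

/-- Commutation matrix `γ_C(ρ, M)` built from the square root `s = √ρ` of a density
matrix (for a pure state `ρ = |ψ⟩⟨ψ|`, `√ρ = ρ`), with entries
`γ_C(ρ,M)_{μν} = −tr([M_μ,√ρ][M_ν,√ρ])`. -/
def gammaC {d ι : Type*} [Fintype d] (s : Matrix d d ℂ) (M : ι → Matrix d d ℂ) :
    Matrix ι ι ℝ :=
  fun μ ν => (-(Matrix.trace (mComm (M μ) s * mComm (M ν) s))).re

/-- Largest eigenvalue of a (finite, real symmetric) matrix. -/
def maxEig {ι : Type*} [Fintype ι] (G : Matrix ι ι ℝ) : ℝ :=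
  sSup {c : ℝ | ∃ v : ι → ℝ, v ≠ 0 ∧ G.mulVec v = c • v}

/-- Pauli matrix `σ^x`. -/
def sigmaX : Matrix (Fin 2) (Fin 2) ℂ := !![0, 1; 1, 0]

/-- Pauli matrix `σ^y`. -/
def sigmaY : Matrix (Fin 2) (Fin 2) ℂ := !![0, -Complex.I; Complex.I, 0]

/-- Pauli matrix `σ^z`. -/
def sigmaZ : Matrix (Fin 2) (Fin 2) ℂ := !![1, 0; 0, -1]

/-- The normalized-Pauli trace-orthonormal Hermitian basis
`{σ^x/√2, σ^y/√2, σ^z/√2, I/√2}` of a qubit cell. -/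
def pauliBasis : Fin 4 → Matrix (Fin 2) (Fin 2) ℂ :=
  ![(Real.sqrt 2 : ℂ)⁻¹ • sigmaX, (Real.sqrt 2 : ℂ)⁻¹ • sigmaY,
    (Real.sqrt 2 : ℂ)⁻¹ • sigmaZ, (Real.sqrt 2 : ℂ)⁻¹ • (1 : Matrix (Fin 2) (Fin 2) ℂ)]

/-- The operator on `(ℂ²)^{⊗N}` acting as `A` on qubit `i` and as the identity on
all other qubits. -/
def localOp (N : ℕ) (i : Fin N) (A : Matrix (Fin 2) (Fin 2) ℂ) :
    Matrix (Fin N → Fin 2) (Fin N → Fin 2) ℂ :=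
  fun x y => A (x i) (y i) * ∏ j ∈ Finset.univ.erase i, (if x j = y j then 1 else 0)

/-- The normalized-Pauli local observable set on `N` qubits. -/
def pauliObs (N : ℕ) : Fin N × Fin 4 → Matrix (Fin N → Fin 2) (Fin N → Fin 2) ℂ :=
  fun μ => localOp N μ.1 (pauliBasis μ.2)

variable {d : Type*} [Fintype d] [DecidableEq d]

lemma vv_mul (u v : d → ℂ) (M : Matrix d d ℂ) :
    vecMulVec u v * M = vecMulVec u (v ᵥ* M) := by
  ext x y
  simp [vecMulVec_apply, Matrix.mul_apply, Matrix.vecMul, dotProduct, Finset.mul_sum, mul_assoc]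

lemma mul_vv (u v : d → ℂ) (M : Matrix d d ℂ) :
    M * vecMulVec u v = vecMulVec (M *ᵥ u) v := by
  ext x y
  simp [vecMulVec_apply, Matrix.mul_apply, Matrix.mulVec, dotProduct, Finset.sum_mul, mul_assoc]

lemma trace_vv (u v : d → ℂ) : (vecMulVec u v).trace = v ⬝ᵥ u := by
  simp [Matrix.trace, Matrix.diag, vecMulVec_apply, dotProduct, mul_comm]

lemma trace_comm_eq (w : d → ℂ) (hw : star w ⬝ᵥ w = 1) (A B : Matrix d d ℂ) :
    (mComm A (vecMulVec w (star w)) * mComm B (vecMulVec w (star w))).trace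
      = 2 * (star w ⬝ᵥ A *ᵥ w) * (star w ⬝ᵥ B *ᵥ w)
        - star w ⬝ᵥ (A * B) *ᵥ w - star w ⬝ᵥ (B * A) *ᵥ w := by
  have h1 : mComm A (vecMulVec w (star w))
      = vecMulVec (A *ᵥ w) (star w) - vecMulVec w (star w ᵥ* A) := by
    rw [mComm, mul_vv, vv_mul]
  have h2 : mComm B (vecMulVec w (star w))
      = vecMulVec (B *ᵥ w) (star w) - vecMulVec w (star w ᵥ* B) := by
    rw [mComm, mul_vv, vv_mul]
  have key : ∀ (a b c e : d → ℂ), vecMulVec a b * vecMulVec c e = (b ⬝ᵥ c) • vecMulVec a e := by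
    intro a b c e; ext x y
    simp [vecMulVec_apply, Matrix.mul_apply, dotProduct, Finset.sum_mul, Finset.mul_sum]
    congr 1; ext z; ring
  rw [h1, h2, sub_mul, mul_sub, mul_sub, key, key, key, key]
  simp only [Matrix.trace_sub, Matrix.trace_smul, trace_vv, smul_eq_mul]
  have e1 : (star w ᵥ* A) ⬝ᵥ (B *ᵥ w) = star w ⬝ᵥ (A * B) *ᵥ w := by
    rw [← Matrix.dotProduct_mulVec, Matrix.mulVec_mulVec]
  have e2 : (star w ᵥ* B) ⬝ᵥ (A *ᵥ w) = star w ⬝ᵥ (B * A) *ᵥ w := by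
    rw [← Matrix.dotProduct_mulVec, Matrix.mulVec_mulVec]
  have e3 : (star w ᵥ* A) ⬝ᵥ w = star w ⬝ᵥ A *ᵥ w := by
    rw [← Matrix.dotProduct_mulVec]
  have e4 : (star w ᵥ* B) ⬝ᵥ w = star w ⬝ᵥ B *ᵥ w := by
    rw [← Matrix.dotProduct_mulVec]
  rw [e1, e2, e3, e4, hw]
  ring

variable {N : ℕ}

def eVec (N : ℕ) (k : Fin N) : Fin N → Fin 2 := fun j => if j = k then 1 else 0

def wt (x : Fin N → Fin 2) : ℕ := (Finset.univ.filter fun j => x j = 1).card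

lemma fin2 (b : Fin 2) : b = 0 ∨ b = 1 := by omega

lemma wt_one_iff (x : Fin N → Fin 2) : wt x = 1 ↔ ∃ k, x = eVec N k := by
  constructor
  · intro h
    obtain ⟨k, hk⟩ := Finset.card_eq_one.mp h
    refine ⟨k, funext fun j => ?_⟩
    have hj := Finset.ext_iff.mp hk j
    simp only [Finset.mem_filter, Finset.mem_univ, true_and, Finset.mem_singleton] at hj
    by_cases hjk : j = k
    · subst hjk; simp [eVec]; exact hj.mpr rfl
    · simp [eVec, hjk]
      rcases fin2 (x j) with h0 | h1
      · exact h0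
      · exact absurd (hj.mp h1) hjk
  · rintro ⟨k, rfl⟩
    rw [wt, Finset.card_eq_one]
    exact ⟨k, by ext j; simp [eVec]⟩

lemma eVec_injective : Function.Injective (eVec N) := by
  intro k k' h
  have := congrFun h k
  simp [eVec] at this
  by_contra hne
  exact hne this

lemma sum_wt_one (f : (Fin N → Fin 2) → ℂ) :
    (∑ x, if wt x = 1 then f x else 0) = ∑ k, f (eVec N k) := by
  rw [← Finset.sum_filter]
  have himg : Finset.univ.filter (fun x : Fin N → Fin 2 => wt x = 1)
      = Finset.univ.image (eVec N) := by
    ext x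
    simp only [Finset.mem_filter, Finset.mem_univ, true_and, Finset.mem_image]
    rw [wt_one_iff]
    constructor
    · rintro ⟨k, rfl⟩; exact ⟨k, rfl⟩
    · rintro ⟨k, rfl⟩; exact ⟨k, rfl⟩
  rw [himg, Finset.sum_image (fun a _ b _ h => eVec_injective h)]

lemma localOp_mulVec (i : Fin N) (A : Matrix (Fin 2) (Fin 2) ℂ) (v : (Fin N → Fin 2) → ℂ)
    (x : Fin N → Fin 2) :
    (localOp N i A *ᵥ v) x = ∑ c : Fin 2, A (x i) c * v (Function.update x i c) := by
  rw [Matrix.mulVec, dotProduct]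
  have key : ∀ y : Fin N → Fin 2,
      localOp N i A x y * v y
        = if (∀ j, j ≠ i → y j = x j) then A (x i) (y i) * v y else 0 := by
    intro y
    rw [localOp]
    by_cases h : ∀ j, j ≠ i → y j = x j
    · rw [if_pos h]
      have : ∀ j ∈ Finset.univ.erase i, ((if x j = y j then (1:ℂ) else 0) = 1) := by
        intro j hj
        rw [if_pos ((h j (Finset.mem_erase.mp hj).1).symm)]
      rw [Finset.prod_congr rfl this]
      simp
    · rw [if_neg h]
      push_neg at h
      obtain ⟨j, hji, hxy⟩ := h
      have hz : (∏ j ∈ Finset.univ.erase i, (if x j = y j then (1:ℂ) else 0)) = 0 :=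
        Finset.prod_eq_zero (Finset.mem_erase.mpr ⟨hji, Finset.mem_univ j⟩)
          (by rw [if_neg (fun hh => hxy hh.symm)])
      rw [hz]; ring
  rw [Finset.sum_congr rfl (fun y _ => key y), ← Finset.sum_filter]
  have himg : Finset.univ.filter (fun y : Fin N → Fin 2 => ∀ j, j ≠ i → y j = x j)
      = Finset.univ.image (fun c => Function.update x i c) := by
    ext y
    simp only [Finset.mem_filter, Finset.mem_univ, true_and, Finset.mem_image]
    constructor
    · intro h
      refine ⟨y i, funext fun j => ?_⟩
      by_cases hj : j = i
      · subst hj; simp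
      · simp [Function.update_of_ne hj, h j hj]
    · rintro ⟨c, rfl⟩ j hj
      simp [Function.update_of_ne hj]
  have hinj : ∀ a ∈ Finset.univ, ∀ b ∈ Finset.univ,
      Function.update x i a = Function.update x i b → a = b := by
    intro a _ b _ h
    have := congrFun h i
    simpa using this
  rw [himg, Finset.sum_image hinj]
  refine Finset.sum_congr rfl fun c _ => ?_
  simp

lemma wt_update (x : Fin N → Fin 2) (i : Fin N) (b : Fin 2) :
    wt (Function.update x i b) + (if x i = 1 then 1 else 0)
      = wt x + (if b = 1 then 1 else 0) := by
  have hs : ∀ z : Fin N → Fin 2, wt z = ∑ j, (if z j = 1 then 1 else 0) := by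
    intro z; rw [wt, Finset.card_filter]
  rw [hs, hs]
  rw [← Finset.add_sum_erase _ _ (Finset.mem_univ i), ← Finset.add_sum_erase _ (fun j => if x j = 1 then (1:ℕ) else 0) (Finset.mem_univ i)]
  have : ∀ j ∈ Finset.univ.erase i,
      (if Function.update x i b j = 1 then (1:ℕ) else 0) = (if x j = 1 then 1 else 0) := by
    intro j hj
    rw [Function.update_of_ne (Finset.mem_erase.mp hj).1]
  rw [Finset.sum_congr rfl this]
  simp only [Function.update_self]
  ring

lemma wt_eVec (k : Fin N) : wt (eVec N k) = 1 := (wt_one_iff _).mpr ⟨k, rfl⟩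

lemma eVec_apply_self (k : Fin N) : eVec N k k = 1 := by simp [eVec]
lemma eVec_apply_ne {k j : Fin N} (h : j ≠ k) : eVec N k j = 0 := by simp [eVec, h]

lemma sq_c (hN : 1 ≤ N) : (Real.sqrt N : ℂ)⁻¹ * (Real.sqrt N : ℂ)⁻¹ = (N : ℂ)⁻¹ := by
  rw [← mul_inv, ← Complex.ofReal_mul, Real.mul_self_sqrt (Nat.cast_nonneg N)]
  norm_num


lemma sum_ite_eq_card (hN : 1 ≤ N) (i : Fin N) (X Y : ℂ) :
    (∑ k : Fin N, if k = i then X else Y) = X + ((N : ℂ) - 1) * Y := by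
  rw [Finset.sum_ite, Finset.sum_const, Finset.sum_const]
  have h1 : (Finset.univ.filter (fun k : Fin N => k = i)) = {i} := by ext; simp
  have h2 : (Finset.univ.filter (fun k : Fin N => ¬ k = i)) = Finset.univ.erase i := by
    ext k; simp [Finset.mem_erase]
  rw [h1, h2, Finset.card_singleton, Finset.card_erase_of_mem (Finset.mem_univ i),
    Finset.card_univ, Fintype.card_fin]
  simp only [nsmul_eq_mul, one_mul, Nat.cast_sub hN, Nat.cast_one]


section Wsec
variable (W : (Fin N → Fin 2) → ℂ)
  (hW : ∀ x, W x = if (Finset.univ.filter fun j => x j = 1).card = 1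
      then (Real.sqrt N : ℂ)⁻¹ else 0)
include hW

lemma W_wt (y : Fin N → Fin 2) : W y = if wt y = 1 then (Real.sqrt N : ℂ)⁻¹ else 0 := hW y

lemma star_W : star W = W := by
  funext x
  rw [Pi.star_apply, hW x]
  split <;> simp [Complex.star_def, Complex.conj_ofReal]

lemma dot_W (u : (Fin N → Fin 2) → ℂ) :
    star W ⬝ᵥ u = (Real.sqrt N : ℂ)⁻¹ * ∑ k, u (eVec N k) := by
  rw [star_W W hW, dotProduct]
  have h : ∀ x, W x * u x = if wt x = 1 then (Real.sqrt N : ℂ)⁻¹ * u x else 0 := by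
    intro x; rw [W_wt W hW]; split <;> simp
  rw [Finset.sum_congr rfl (fun x _ => h x), sum_wt_one, Finset.mul_sum]

lemma norm_W (hN : 1 ≤ N) : star W ⬝ᵥ W = 1 := by
  rw [dot_W W hW]
  have h : ∀ k : Fin N, W (eVec N k) = (Real.sqrt N : ℂ)⁻¹ := by
    intro k; rw [W_wt W hW, if_pos (wt_eVec k)]
  rw [Finset.sum_congr rfl (fun k _ => h k), Finset.sum_const, Finset.card_univ,
    Fintype.card_fin, nsmul_eq_mul, ← mul_assoc, mul_comm ((Real.sqrt N:ℂ))⁻¹ (N:ℂ), mul_assoc,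
    sq_c hN]
  have hN0 : (N : ℂ) ≠ 0 := by
    simp only [ne_eq, Nat.cast_eq_zero]; omega
  field_simp

lemma C1 (hN : 1 ≤ N) (i : Fin N) (A : Matrix (Fin 2) (Fin 2) ℂ) :
    star W ⬝ᵥ (localOp N i A *ᵥ W) = (N : ℂ)⁻¹ * (A 1 1 + ((N : ℂ) - 1) * A 0 0) := by
  rw [dot_W W hW]
  have hterm : ∀ k : Fin N, (localOp N i A *ᵥ W) (eVec N k)
      = if k = i then A 1 1 * (Real.sqrt N : ℂ)⁻¹ else A 0 0 * (Real.sqrt N : ℂ)⁻¹ := by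
    intro k
    rw [localOp_mulVec, Fin.sum_univ_two]
    by_cases hk : k = i
    · subst hk
      have e1 : eVec N k k = 1 := eVec_apply_self k
      have w0 : wt (Function.update (eVec N k) k 0) = 0 := by
        have h := wt_update (eVec N k) k 0; rw [wt_eVec] at h; simp [e1] at h; omega
      have w1 : wt (Function.update (eVec N k) k 1) = 1 := by
        have h := wt_update (eVec N k) k 1; rw [wt_eVec] at h; simp [e1] at h; omega
      rw [W_wt W hW, W_wt W hW, if_neg (by omega), if_pos w1, e1, if_pos rfl]
      ring
    · have e1 : eVec N k i = 0 := eVec_apply_ne (fun h => hk h.symm)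
      have w0 : wt (Function.update (eVec N k) i 0) = 1 := by
        have h := wt_update (eVec N k) i 0; rw [wt_eVec] at h; simp [e1] at h; omega
      have w1 : wt (Function.update (eVec N k) i 1) = 2 := by
        have h := wt_update (eVec N k) i 1; rw [wt_eVec] at h; simp [e1] at h; omega
      rw [W_wt W hW, W_wt W hW, if_pos w0, if_neg (by omega), e1, if_neg hk]
      ring
  rw [Finset.sum_congr rfl (fun k _ => hterm k), sum_ite_eq_card hN]
  rw [mul_comm (A 1 1), mul_comm (A 0 0), ← mul_assoc ((N:ℂ)-1), mul_comm ((N:ℂ)-1),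
    mul_assoc ((Real.sqrt N:ℂ))⁻¹, ← mul_add, ← mul_assoc, sq_c hN]


lemma C2 (hN : 1 ≤ N) (i : Fin N) (A B : Matrix (Fin 2) (Fin 2) ℂ) :
    star W ⬝ᵥ (localOp N i A *ᵥ (localOp N i B *ᵥ W))
      = (N : ℂ)⁻¹ * ((A 1 0 * B 0 1 + A 1 1 * B 1 1)
          + ((N : ℂ) - 1) * (A 0 0 * B 0 0 + A 0 1 * B 1 0)) := by
  rw [dot_W W hW]
  have hterm : ∀ k : Fin N, (localOp N i A *ᵥ (localOp N i B *ᵥ W)) (eVec N k)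
      = if k = i then (A 1 0 * B 0 1 + A 1 1 * B 1 1) * (Real.sqrt N : ℂ)⁻¹
        else (A 0 0 * B 0 0 + A 0 1 * B 1 0) * (Real.sqrt N : ℂ)⁻¹ := by
    intro k
    rw [localOp_mulVec]
    have hin : ∀ c : Fin 2, (localOp N i B *ᵥ W) (Function.update (eVec N k) i c)
        = ∑ d : Fin 2, B c d * W (Function.update (eVec N k) i d) := by
      intro c
      rw [localOp_mulVec]
      refine Finset.sum_congr rfl fun d _ => ?_
      rw [Function.update_self, Function.update_idem]
    rw [Finset.sum_congr rfl (fun c _ => by rw [hin c])]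
    rw [Fin.sum_univ_two, Fin.sum_univ_two, Fin.sum_univ_two]
    by_cases hk : k = i
    · subst hk
      have e1 : eVec N k k = 1 := eVec_apply_self k
      have w0 : wt (Function.update (eVec N k) k 0) = 0 := by
        have h := wt_update (eVec N k) k 0; rw [wt_eVec] at h; simp [e1] at h; omega
      have w1 : wt (Function.update (eVec N k) k 1) = 1 := by
        have h := wt_update (eVec N k) k 1; rw [wt_eVec] at h; simp [e1] at h; omega
      rw [W_wt W hW, W_wt W hW, if_neg (by omega), if_pos w1, e1, if_pos rfl]
      ring
    · have e1 : eVec N k i = 0 := eVec_apply_ne (fun h => hk h.symm)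
      have w0 : wt (Function.update (eVec N k) i 0) = 1 := by
        have h := wt_update (eVec N k) i 0; rw [wt_eVec] at h; simp [e1] at h; omega
      have w1 : wt (Function.update (eVec N k) i 1) = 2 := by
        have h := wt_update (eVec N k) i 1; rw [wt_eVec] at h; simp [e1] at h; omega
      rw [W_wt W hW, W_wt W hW, if_pos w0, if_neg (by omega), e1, if_neg hk]
      ring
  rw [Finset.sum_congr rfl (fun k _ => hterm k), sum_ite_eq_card hN]
  set X := A 1 0 * B 0 1 + A 1 1 * B 1 1
  set Y := A 0 0 * B 0 0 + A 0 1 * B 1 0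
  rw [mul_comm X, mul_comm Y, ← mul_assoc ((N:ℂ)-1), mul_comm ((N:ℂ)-1),
    mul_assoc ((Real.sqrt N:ℂ))⁻¹, ← mul_add, ← mul_assoc, sq_c hN]

omit hW in
lemma sum_two_special (hN2 : 2 ≤ N) (F : Fin N → ℂ) (i j : Fin N) (hij : i ≠ j)
    (X Y Z : ℂ) (hFi : F i = X) (hFj : F j = Y)
    (hFo : ∀ k, k ≠ i → k ≠ j → F k = Z) :
    ∑ k, F k = X + Y + ((N : ℂ) - 2) * Z := by
  have hjmem : j ∈ Finset.univ.erase i := Finset.mem_erase.mpr ⟨hij.symm, Finset.mem_univ j⟩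
  rw [← Finset.add_sum_erase _ F (Finset.mem_univ i), ← Finset.add_sum_erase _ F hjmem]
  have hcongr : ∀ k ∈ (Finset.univ.erase i).erase j, F k = Z := by
    intro k hk
    obtain ⟨hkj, hki⟩ := Finset.mem_erase.mp hk
    exact hFo k (Finset.mem_erase.mp hki).1 hkj
  rw [Finset.sum_congr rfl hcongr, Finset.sum_const, hFi, hFj]
  have hcard : ((Finset.univ.erase i).erase j).card = N - 2 := by
    rw [Finset.card_erase_of_mem hjmem, Finset.card_erase_of_mem (Finset.mem_univ i),
      Finset.card_univ, Fintype.card_fin]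
    omega
  rw [hcard, nsmul_eq_mul, Nat.cast_sub hN2]
  push_cast
  ring

lemma C3 (hN2 : 2 ≤ N) (i j : Fin N) (hij : i ≠ j) (A B : Matrix (Fin 2) (Fin 2) ℂ) :
    star W ⬝ᵥ (localOp N i A *ᵥ (localOp N j B *ᵥ W))
      = (N : ℂ)⁻¹ * (A 1 1 * B 0 0 + A 1 0 * B 0 1 + A 0 1 * B 1 0 + A 0 0 * B 1 1
          + ((N : ℂ) - 2) * (A 0 0 * B 0 0)) := by
  rw [dot_W W hW]
  set c0 : ℂ := (Real.sqrt N : ℂ)⁻¹ with hc0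
  have hterm : ∀ k : Fin N, (localOp N i A *ᵥ (localOp N j B *ᵥ W)) (eVec N k)
      = ∑ c : Fin 2, ∑ d : Fin 2,
          A (eVec N k i) c * (B (eVec N k j) d
            * W (Function.update (Function.update (eVec N k) i c) j d)) := by
    intro k
    rw [localOp_mulVec]
    refine Finset.sum_congr rfl fun c _ => ?_
    rw [localOp_mulVec, Finset.mul_sum]
    refine Finset.sum_congr rfl fun d _ => ?_
    rw [Function.update_of_ne hij.symm]
  rw [Finset.sum_congr rfl (fun k _ => hterm k)]
  -- weight of double update
  have wdd : ∀ (k : Fin N) (c d : Fin 2),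
      wt (Function.update (Function.update (eVec N k) i c) j d)
        + (if eVec N k j = 1 then 1 else 0) + (if eVec N k i = 1 then 1 else 0)
      = 1 + (if c = 1 then 1 else 0) + (if d = 1 then 1 else 0) := by
    intro k c d
    have h1 := wt_update (Function.update (eVec N k) i c) j d
    rw [Function.update_of_ne hij.symm] at h1
    have h2 := wt_update (eVec N k) i c
    rw [wt_eVec] at h2
    omega
  have main : ∀ k : Fin N, (∑ c : Fin 2, ∑ d : Fin 2,
      A (eVec N k i) c * (B (eVec N k j) d
        * W (Function.update (Function.update (eVec N k) i c) j d)))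
    = if k = i then (A 1 1 * B 0 0 + A 1 0 * B 0 1) * c0
      else if k = j then (A 0 1 * B 1 0 + A 0 0 * B 1 1) * c0
      else (A 0 0 * B 0 0) * c0 := by
    intro k
    have hwval : ∀ c d : Fin 2,
        W (Function.update (Function.update (eVec N k) i c) j d)
        = if wt (Function.update (Function.update (eVec N k) i c) j d) = 1 then c0 else 0 :=
      fun c d => W_wt W hW _
    by_cases hki : k = i
    · subst hki
      have e1 : eVec N k k = 1 := eVec_apply_self k
      have e2 : eVec N k j = 0 := eVec_apply_ne hij.symm
      rw [if_pos rfl]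
      rw [Fin.sum_univ_two, Fin.sum_univ_two, Fin.sum_univ_two]
      have g00 := wdd k 0 0; have g01 := wdd k 0 1
      have g10 := wdd k 1 0; have g11 := wdd k 1 1
      simp only [e1, e2, if_pos rfl] at g00 g01 g10 g11
      norm_num at g00 g01 g10 g11
      rw [hwval, hwval, hwval, hwval, e1, e2,
        if_neg (by omega), if_pos (by omega), if_pos (by omega), if_neg (by omega)]
      ring
    · by_cases hkj : k = j
      · subst hkj
        have e1 : eVec N k k = 1 := eVec_apply_self k
        have e2 : eVec N k i = 0 := eVec_apply_ne (fun h => hki h.symm)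
        rw [if_neg hki, if_pos rfl]
        rw [Fin.sum_univ_two, Fin.sum_univ_two, Fin.sum_univ_two]
        have g00 := wdd k 0 0; have g01 := wdd k 0 1
        have g10 := wdd k 1 0; have g11 := wdd k 1 1
        simp only [e1, e2, if_pos rfl] at g00 g01 g10 g11
        norm_num at g00 g01 g10 g11
        rw [hwval, hwval, hwval, hwval, e1, e2,
          if_neg (by omega), if_pos (by omega), if_pos (by omega), if_neg (by omega)]
        ring
      · have e1 : eVec N k i = 0 := eVec_apply_ne (fun h => hki h.symm)
        have e2 : eVec N k j = 0 := eVec_apply_ne (fun h => hkj h.symm)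
        rw [if_neg hki, if_neg hkj]
        rw [Fin.sum_univ_two, Fin.sum_univ_two, Fin.sum_univ_two]
        have g00 := wdd k 0 0; have g01 := wdd k 0 1
        have g10 := wdd k 1 0; have g11 := wdd k 1 1
        simp only [e1, e2] at g00 g01 g10 g11
        norm_num at g00 g01 g10 g11
        rw [hwval, hwval, hwval, hwval, e1, e2,
          if_pos (by omega), if_neg (by omega), if_neg (by omega), if_neg (by omega)]
        ring
  rw [Finset.sum_congr rfl (fun k _ => main k)]
  rw [sum_two_special hN2
    (fun k => if k = i then (A 1 1 * B 0 0 + A 1 0 * B 0 1) * c0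
      else if k = j then (A 0 1 * B 1 0 + A 0 0 * B 1 1) * c0 else A 0 0 * B 0 0 * c0)
    i j hij ((A 1 1 * B 0 0 + A 1 0 * B 0 1) * c0) ((A 0 1 * B 1 0 + A 0 0 * B 1 1) * c0)
    (A 0 0 * B 0 0 * c0) (if_pos rfl)
    (by beta_reduce; rw [if_neg (Ne.symm hij), if_pos rfl])
    (fun k hki hkj => by beta_reduce; rw [if_neg hki, if_neg hkj])]
  have hsq : c0 * c0 = (N : ℂ)⁻¹ := sq_c (by omega)
  linear_combination (A 1 1 * B 0 0 + A 1 0 * B 0 1 + A 0 1 * B 1 0 + A 0 0 * B 1 1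
    + ((N:ℂ) - 2) * (A 0 0 * B 0 0)) * hsq


omit hW in
lemma re_helper (z : ℂ) (r : ℝ) (h : z = (r : ℂ)) : z.re = r := by
  rw [h]; exact Complex.ofReal_re r

end Wsec

def pRaw : Fin 4 → Matrix (Fin 2) (Fin 2) ℂ := ![sigmaX, sigmaY, sigmaZ, 1]

lemma pauliBasis_eq (a : Fin 4) : pauliBasis a = (Real.sqrt 2 : ℂ)⁻¹ • pRaw a := by
  fin_cases a <;> rfl

lemma localOp_smul {N : ℕ} (i : Fin N) (c : ℂ) (A : Matrix (Fin 2) (Fin 2) ℂ) :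
    localOp N i (c • A) = c • localOp N i A := by
  ext x y
  simp [localOp, Matrix.smul_apply]
  ring

section Wsec2
variable {N : ℕ} (W : (Fin N → Fin 2) → ℂ)
  (hW : ∀ x, W x = if (Finset.univ.filter fun j => x j = 1).card = 1
      then (Real.sqrt N : ℂ)⁻¹ else 0)
include hW

lemma gamma_reduce (hN : 1 ≤ N) (i j : Fin N) (a b : Fin 4) :
    gammaC (vecMulVec W (star W)) (pauliObs N) (i, a) (j, b)
      = (-((2:ℂ)⁻¹ *
          (2 * (star W ⬝ᵥ localOp N i (pRaw a) *ᵥ W) * (star W ⬝ᵥ localOp N j (pRaw b) *ᵥ W)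
            - star W ⬝ᵥ (localOp N i (pRaw a) *ᵥ (localOp N j (pRaw b) *ᵥ W))
            - star W ⬝ᵥ (localOp N j (pRaw b) *ᵥ (localOp N i (pRaw a) *ᵥ W))))).re := by
  have hsq2 : ((Real.sqrt 2 : ℂ))⁻¹ * ((Real.sqrt 2 : ℂ))⁻¹ = (2:ℂ)⁻¹ := by
    rw [← mul_inv, ← Complex.ofReal_mul, Real.mul_self_sqrt (by norm_num : (0:ℝ) ≤ 2)]
    norm_num
  have hobs : ∀ (i : Fin N) (a : Fin 4),
      pauliObs N (i, a) = (Real.sqrt 2 : ℂ)⁻¹ • localOp N i (pRaw a) := by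
    intro i a
    rw [pauliObs]
    simp only
    rw [pauliBasis_eq, localOp_smul]
  have hmc : ∀ (X s : Matrix (Fin N → Fin 2) (Fin N → Fin 2) ℂ),
      mComm ((Real.sqrt 2 : ℂ)⁻¹ • X) s = (Real.sqrt 2 : ℂ)⁻¹ • mComm X s := by
    intro X s
    rw [mComm, mComm, Matrix.smul_mul, Matrix.mul_smul, smul_sub]
  simp only [gammaC, hobs, hmc, Matrix.smul_mul, Matrix.mul_smul, smul_smul, hsq2,
    Matrix.trace_smul, smul_eq_mul]
  rw [trace_comm_eq W (norm_W W hW hN)]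
  simp only [← Matrix.mulVec_mulVec]

lemma gamma_diag (hN2 : 2 ≤ N) (i : Fin N) (a b : Fin 4) :
    gammaC (vecMulVec W (star W)) (pauliObs N) (i, a) (i, b)
      = if a = b then (![1, 1, 1 - (((N:ℝ) - 2)/N)^2, 0] : Fin 4 → ℝ) a else 0 := by
  have hN : 1 ≤ N := by omega
  have hNC : (N:ℂ) ≠ 0 := by
    simp only [ne_eq, Nat.cast_eq_zero]; omega
  rw [gamma_reduce W hW hN, C1 W hW hN, C1 W hW hN, C2 W hW hN, C2 W hW hN]
  fin_cases a <;> fin_cases b <;>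
    · apply re_helper
      simp only [pRaw, sigmaX, sigmaY, sigmaZ]
      try norm_num [Matrix.one_apply]
      try push_cast
      try field_simp
      try ring

lemma gamma_off (hN2 : 2 ≤ N) (i j : Fin N) (hij : i ≠ j) (a b : Fin 4) :
    gammaC (vecMulVec W (star W)) (pauliObs N) (i, a) (j, b)
      = if a = b then (![2/(N:ℝ), 2/(N:ℝ), -(4/(N:ℝ)^2), 0] : Fin 4 → ℝ) a else 0 := by
  have hN : 1 ≤ N := by omega
  have hNC : (N:ℂ) ≠ 0 := by
    simp only [ne_eq, Nat.cast_eq_zero]; omega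
  rw [gamma_reduce W hW hN, C1 W hW hN, C1 W hW hN, C3 W hW hN2 i j hij,
    C3 W hW hN2 j i (Ne.symm hij)]
  fin_cases a <;> fin_cases b <;>
    · apply re_helper
      simp only [pRaw, sigmaX, sigmaY, sigmaZ]
      try norm_num [Matrix.one_apply]
      try push_cast
      try field_simp
      try ring

end Wsec2

def dvec (N : ℕ) : Fin 4 → ℝ := ![1, 1, 1 - (((N:ℝ) - 2)/N)^2, 0]
def cvec (N : ℕ) : Fin 4 → ℝ := ![2/(N:ℝ), 2/(N:ℝ), -(4/(N:ℝ)^2), 0]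

def Gm (N : ℕ) : Matrix (Fin N × Fin 4) (Fin N × Fin 4) ℝ :=
  fun μ ν => if μ.2 = ν.2 then (if μ.1 = ν.1 then dvec N μ.2 else cvec N μ.2) else 0

lemma sum_ite_eq_card' {N : ℕ} (hN : 1 ≤ N) (i : Fin N) (X Y : ℝ) :
    (∑ k : Fin N, if i = k then X else Y) = X + ((N : ℝ) - 1) * Y := by
  rw [Finset.sum_ite, Finset.sum_const, Finset.sum_const]
  have h1 : (Finset.univ.filter (fun k : Fin N => i = k)) = {i} := by
    ext k; simp [eq_comm]
  have h2 : (Finset.univ.filter (fun k : Fin N => ¬ i = k)) = Finset.univ.erase i := by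
    ext k; simp [Finset.mem_erase, eq_comm (a := i)]
  rw [h1, h2, Finset.card_singleton, Finset.card_erase_of_mem (Finset.mem_univ i),
    Finset.card_univ, Fintype.card_fin]
  simp only [nsmul_eq_mul, one_mul, Nat.cast_sub hN, Nat.cast_one]

def vmax (N : ℕ) : Fin N × Fin 4 → ℝ := fun μ => if μ.2 = (0 : Fin 4) then 1 else 0

lemma Gm_mulVec (N : ℕ) (hN2 : 2 ≤ N) :
    (Gm N).mulVec (vmax N) = ((3 * (N:ℝ) - 2)/N) • vmax N := by
  have hNR : (N:ℝ) ≠ 0 := by simp only [ne_eq, Nat.cast_eq_zero]; omega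
  funext μ
  obtain ⟨i, a⟩ := μ
  rw [Matrix.mulVec, dotProduct, Fintype.sum_prod_type]
  simp only [vmax]
  simp only [Gm, Pi.smul_apply, smul_eq_mul]
  have hrow : ∀ j : Fin N, (∑ b : Fin 4,
      (if a = b then (if i = j then dvec N a else cvec N a) else 0)
        * (if b = (0:Fin 4) then 1 else 0))
      = if a = 0 then (if i = j then dvec N 0 else cvec N 0) else 0 := by
    intro j
    rw [Fin.sum_univ_four]
    have d1 : ((1:Fin 4) = 0) = False := by simp
    have d2 : ((2:Fin 4) = 0) = False := by simp
    have d3 : ((3:Fin 4) = 0) = False := by simp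
    by_cases ha : a = (0 : Fin 4)
    · subst ha
      simp only [d1, d2, d3, if_true, if_false, mul_one, mul_zero, add_zero, if_pos rfl]
      try
        have h1 : (0:Fin 4) ≠ 1 := by decide
        have h2 : (0:Fin 4) ≠ 2 := by decide
        have h3 : (0:Fin 4) ≠ 3 := by decide
        rw [if_neg h1, if_neg h2, if_neg h3]
        ring
    · rw [if_neg ha, if_neg ha]
      simp only [d1, d2, d3, if_true, if_false, mul_one, mul_zero, add_zero, zero_add, if_pos rfl]
      try
        by_cases h1 : a = 1 <;> by_cases h2 : a = 2 <;> by_cases h3 : a = 3 <;>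
          simp [h1, h2, h3, ha]
  rw [Finset.sum_congr rfl (fun j _ => hrow j)]
  by_cases ha : a = (0 : Fin 4)
  · subst ha
    simp only [if_pos rfl, vmax, if_true]
    rw [sum_ite_eq_card' (by omega) i]
    simp only [dvec, cvec]
    norm_num
    field_simp
    ring
  · simp only [if_neg ha]
    rw [Finset.sum_const, Finset.card_univ, Fintype.card_fin]
    simp [vmax, ha]

lemma Gm_row_sum (N : ℕ) (hN2 : 2 ≤ N) (μ : Fin N × Fin 4) :
    (∑ ν : Fin N × Fin 4, |Gm N μ ν|) ≤ (3 * (N:ℝ) - 2)/N := by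
  obtain ⟨i, a⟩ := μ
  have hNR : (0:ℝ) < N := by exact_mod_cast (by omega : 0 < N)
  rw [Fintype.sum_prod_type_right]
  have hrow : ∀ b : Fin 4, (∑ j : Fin N, |Gm N (i, a) (j, b)|)
      = if a = b then |dvec N a| + ((N:ℝ) - 1) * |cvec N a| else 0 := by
    intro b
    by_cases hab : a = b
    · rw [if_pos hab]
      have : ∀ j : Fin N, |Gm N (i, a) (j, b)| = if i = j then |dvec N a| else |cvec N a| := by
        intro j
        rw [Gm]
        simp only [if_pos hab]
        split <;> simp
      rw [Finset.sum_congr rfl (fun j _ => this j), sum_ite_eq_card' (by omega) i]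
    · rw [if_neg hab]
      have : ∀ j : Fin N, |Gm N (i, a) (j, b)| = 0 := by
        intro j; rw [Gm]; simp only [if_neg hab]; simp
      rw [Finset.sum_congr rfl (fun j _ => this j), Finset.sum_const, smul_zero]
  rw [show (∑ b : Fin 4, ∑ j : Fin N, |Gm N (i, a) (j, b)|)
      = ∑ b : Fin 4, if a = b then |dvec N a| + ((N:ℝ) - 1) * |cvec N a| else 0 from
    Finset.sum_congr rfl (fun b _ => hrow b)]
  rw [Finset.sum_ite_eq Finset.univ a
    (fun _ => |dvec N a| + ((N:ℝ) - 1) * |cvec N a|), if_pos (Finset.mem_univ a)]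
  have hN1 : (1:ℝ) ≤ (N:ℝ) := by exact_mod_cast (by omega : 1 ≤ N)
  have hN2R : (2:ℝ) ≤ (N:ℝ) := by exact_mod_cast hN2
  fin_cases a
  · simp only [dvec, cvec]
    norm_num
    rw [abs_of_nonneg (by positivity : (0:ℝ) ≤ 2/(N:ℝ))]
    have heq : (1:ℝ) + ((N:ℝ) - 1) * (2 / (N:ℝ)) = (3*(N:ℝ)-2)/(N:ℝ) := by
      field_simp; ring
    rw [heq]
  · simp only [dvec, cvec]
    norm_num
    rw [abs_of_nonneg (by positivity : (0:ℝ) ≤ 2/(N:ℝ))]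
    have heq : (1:ℝ) + ((N:ℝ) - 1) * (2 / (N:ℝ)) = (3*(N:ℝ)-2)/(N:ℝ) := by
      field_simp; ring
    rw [heq]
  · simp only [dvec, cvec]
    norm_num
    have e1 : |1 - (((N:ℝ) - 2)/N)^2| = 1 - (((N:ℝ) - 2)/N)^2 := by
      rw [abs_of_nonneg]
      have h01 : (((N:ℝ) - 2)/N)^2 ≤ 1 := by
        rw [sq_le_one_iff_abs_le_one,
          abs_of_nonneg (div_nonneg (by linarith) hNR.le)]
        rw [div_le_one hNR]; linarith
      linarith
    have e2 : |(4:ℝ)/(N:ℝ)^2| = 4/(N:ℝ)^2 := abs_of_pos (div_pos (by norm_num) (pow_pos hNR 2))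
    rw [e1, e2]
    have h1 : 1 - (((N:ℝ) - 2)/N)^2 + ((N:ℝ)-1)*(4/(N:ℝ)^2) = (8*(N:ℝ)-8)/(N:ℝ)^2 := by
      field_simp; ring
    rw [h1, div_le_div_iff₀ (pow_pos hNR 2) hNR]
    nlinarith [mul_nonneg (mul_nonneg hNR.le (by linarith : (0:ℝ) ≤ 3*(N:ℝ)-4))
      (by linarith : (0:ℝ) ≤ (N:ℝ)-2)]
  · simp only [dvec, cvec]
    norm_num
    apply div_nonneg <;> linarith

lemma eig_le {ι : Type*} [Fintype ι] [Nonempty ι] (G : Matrix ι ι ℝ) (lam : ℝ)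
    (hrow : ∀ μ, (∑ ν, |G μ ν|) ≤ lam) (c : ℝ) (v : ι → ℝ) (hv : v ≠ 0)
    (heig : G.mulVec v = c • v) : c ≤ lam := by
  obtain ⟨μ0, -, hmax⟩ := Finset.exists_max_image Finset.univ (fun μ => |v μ|)
    Finset.univ_nonempty
  have hvpos : 0 < |v μ0| := by
    by_contra h
    push_neg at h
    apply hv
    funext ν
    have := hmax ν (Finset.mem_univ ν)
    have : |v ν| ≤ 0 := le_trans this h
    have := abs_nonneg (v ν)
    simpa using abs_eq_zero.mp (le_antisymm ‹|v ν| ≤ 0› ‹0 ≤ |v ν|›)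
  have heq : ∑ ν, G μ0 ν * v ν = c * v μ0 := by
    have := congrFun heig μ0
    simpa [Matrix.mulVec, dotProduct] using this
  have hbound : |c| * |v μ0| ≤ lam * |v μ0| := by
    calc |c| * |v μ0| = |c * v μ0| := (abs_mul c (v μ0)).symm
    _ = |∑ ν, G μ0 ν * v ν| := by rw [heq]
    _ ≤ ∑ ν, |G μ0 ν * v ν| := Finset.abs_sum_le_sum_abs _ _
    _ ≤ ∑ ν, |G μ0 ν| * |v μ0| := by
        refine Finset.sum_le_sum fun ν _ => ?_
        rw [abs_mul]
        exact mul_le_mul_of_nonneg_left (hmax ν (Finset.mem_univ ν)) (abs_nonneg _)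
    _ = (∑ ν, |G μ0 ν|) * |v μ0| := by rw [Finset.sum_mul]
    _ ≤ lam * |v μ0| := mul_le_mul_of_nonneg_right (hrow μ0) (abs_nonneg _)
  have hc : |c| ≤ lam := le_of_mul_le_mul_right hbound hvpos
  exact le_trans (le_abs_self c) hc

lemma maxEig_Gm (N : ℕ) (hN2 : 2 ≤ N) : maxEig (Gm N) = (3 * (N:ℝ) - 2)/N := by
  have hpos : 0 < N := by omega
  haveI : NeZero N := ⟨by omega⟩
  haveI : Nonempty (Fin N) := ⟨⟨0, hpos⟩⟩
  set lam := (3 * (N:ℝ) - 2)/N with hlam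
  have hvne : vmax N ≠ 0 := by
    intro h
    have := congrFun h (⟨0, hpos⟩, 0)
    simp [vmax] at this
  have hmem : lam ∈ {c : ℝ | ∃ v : Fin N × Fin 4 → ℝ, v ≠ 0 ∧ (Gm N).mulVec v = c • v} :=
    ⟨vmax N, hvne, Gm_mulVec N hN2⟩
  have hub : ∀ c ∈ {c : ℝ | ∃ v : Fin N × Fin 4 → ℝ, v ≠ 0 ∧ (Gm N).mulVec v = c • v},
      c ≤ lam := by
    rintro c ⟨v, hv, heig⟩
    exact eig_le (Gm N) lam (Gm_row_sum N hN2) c v hv heig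
  rw [maxEig]
  exact le_antisymm (csSup_le ⟨lam, hmem⟩ hub) (le_csSup ⟨lam, hub⟩ hmem)

/-- For the `N`-qubit W state
`W_N = (1/√N)(|10⋯0⟩ + |01⋯0⟩ + ⋯ + |00⋯1⟩)`, `N ≥ 2`, the quantum state
advantage equals `Γ_C(|W_N⟩⟨W_N|) = (3N − 2)/N`. -/
theorem gammaC_of_W_state
    (N : ℕ) (hN : 2 ≤ N)
    (W : (Fin N → Fin 2) → ℂ)
    (hW : ∀ x, W x =
      if (Finset.univ.filter fun j => x j = 1).card = 1
      then (Real.sqrt N : ℂ)⁻¹ else 0) :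
    maxEig (gammaC (vecMulVec W (star W)) (pauliObs N))
      = (3 * (N : ℝ) - 2) / N := by
  have hGeq : gammaC (vecMulVec W (star W)) (pauliObs N) = Gm N := by
    funext μ ν
    obtain ⟨i, a⟩ := μ
    obtain ⟨j, b⟩ := ν
    by_cases hij : i = j
    · subst hij
      rw [gamma_diag W hW hN i a b]
      simp [Gm, dvec]
    · rw [gamma_off W hW hN i j hij a b]
      simp [Gm, cvec, hij]
  rw [hGeq, maxEig_Gm N hN]
end
end

section
/- Let ψ be a pure state of N qubits (N ≥ 2) such that every single-site reduced density matrix equals I/2 and every two-site reduced density matrix equals I/4 (maximal entanglement entropy for all one- and two-site partitions). Then, with the normalized-Pauli local observable set, the commutation matrix γ_C(|ψ⟩⟨ψ|, M) is diagonal, with diagonal entry 1 for every observable built from a Pauli matrix σ^x/√2, σ^y/√2, σ^z/√2 and 0 for every observable built from I/√2; consequently the quantum state advantage is Γ_C(|ψ⟩⟨ψ|) = 1. -/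
open Matrix BigOperators
open scoped ComplexOrder

noncomputable section

section AuxLemmas

lemma aux_sqrt2_self : Real.sqrt 2 * Real.sqrt 2 = 2 := Real.mul_self_sqrt (by norm_num)

lemma aux_sqrt2_sq : ((Real.sqrt 2 : ℝ) : ℂ) * ((Real.sqrt 2 : ℝ) : ℂ) = 2 := by
  rw [← Complex.ofReal_mul, aux_sqrt2_self]; norm_num

lemma aux_delta_prod {N : ℕ} (i : Fin N) (x y : Fin N → Fin 2) :
    (∏ j ∈ Finset.univ.erase i, (if x j = y j then 1 else 0) : ℂ)
      = if ∀ j, j ≠ i → x j = y j then 1 else 0 := by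
  rw [Finset.prod_boole]
  simp

lemma aux_sum_constrained {N : ℕ} (i : Fin N) (x : Fin N → Fin 2)
    (g : (Fin N → Fin 2) → ℂ) :
    (∑ z : Fin N → Fin 2, g z * (if ∀ j, j ≠ i → x j = z j then 1 else 0))
      = ∑ t : Fin 2, g (Function.update x i t) := by
  classical
  simp only [mul_boole]
  rw [← Finset.sum_filter]
  rw [show Finset.univ.filter (fun z => ∀ j, j ≠ i → x j = z j)
      = Finset.image (Function.update x i) Finset.univ from ?_]
  · rw [Finset.sum_image (fun a _ b _ h => Function.update_injective x i h)]
  · ext z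
    simp only [Finset.mem_filter, Finset.mem_univ, true_and, Finset.mem_image]
    constructor
    · intro h
      refine ⟨z i, funext fun j => ?_⟩
      rcases eq_or_ne j i with rfl | hj
      · simp
      · simp [Function.update_of_ne hj, h j hj]
    · rintro ⟨t, rfl⟩ j hj
      simp [Function.update_apply, hj]

lemma aux_localOp_mul {N : ℕ} (i : Fin N) (A B : Matrix (Fin 2) (Fin 2) ℂ) :
    localOp N i A * localOp N i B = localOp N i (A * B) := by
  ext x y
  simp only [Matrix.mul_apply, localOp, aux_delta_prod]
  calc (∑ z : Fin N → Fin 2, (A (x i) (z i) * (if ∀ j, j ≠ i → x j = z j then 1 else 0)) *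
        (B (z i) (y i) * (if ∀ j, j ≠ i → z j = y j then 1 else 0)))
      = ∑ z : Fin N → Fin 2, (A (x i) (z i) * (B (z i) (y i) *
          (if ∀ j, j ≠ i → z j = y j then 1 else 0))) *
          (if ∀ j, j ≠ i → x j = z j then 1 else 0) := by
        refine Finset.sum_congr rfl fun z _ => by ring
    _ = ∑ t : Fin 2, A (x i) t * (B t (y i) * (if ∀ j, j ≠ i → x j = y j then 1 else 0)) := by
        rw [aux_sum_constrained]
        refine Finset.sum_congr rfl fun t _ => ?_
        have h1 : Function.update x i t i = t := Function.update_self i t x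
        rw [h1]
        congr 2
        refine if_congr ⟨fun h j hj => ?_, fun h j hj => ?_⟩ rfl rfl
        · have := h j hj; rwa [Function.update_of_ne hj] at this
        · rw [Function.update_of_ne hj]; exact h j hj
    _ = (∑ t : Fin 2, A (x i) t * B t (y i)) * (if ∀ j, j ≠ i → x j = y j then 1 else 0) := by
        rw [Finset.sum_mul]; exact Finset.sum_congr rfl fun t _ => by ring

variable {d : Type*} [Fintype d]

lemma aux_trace_vecMulVec_mul (ψ w : d → ℂ) (A : Matrix d d ℂ) :
    Matrix.trace (vecMulVec ψ w * A) = ∑ u, ∑ v, w u * A u v * ψ v := by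
  simp only [Matrix.trace, Matrix.diag, Matrix.mul_apply, vecMulVec_apply]
  rw [Finset.sum_comm]
  exact Finset.sum_congr rfl fun u _ => Finset.sum_congr rfl fun v _ => by ring

lemma aux_vecMulVec_mul_mul (ψ w : d → ℂ) (A : Matrix d d ℂ) :
    vecMulVec ψ w * A * vecMulVec ψ w
      = Matrix.trace (vecMulVec ψ w * A) • vecMulVec ψ w := by
  ext x y
  rw [aux_trace_vecMulVec_mul]
  simp only [Matrix.mul_apply, vecMulVec_apply, Matrix.smul_apply, smul_eq_mul,
    Finset.sum_mul, Finset.mul_sum]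
  rw [Finset.sum_comm]
  refine Finset.sum_congr rfl fun u _ => Finset.sum_congr rfl fun v _ => by ring

lemma aux_trace_vecMulVec (ψ w : d → ℂ) :
    Matrix.trace (vecMulVec ψ w) = w ⬝ᵥ ψ := by
  simp [Matrix.trace, Matrix.diag, vecMulVec_apply, dotProduct, mul_comm]

lemma aux_vecMulVec_sq [DecidableEq d] (ψ w : d → ℂ) (h : w ⬝ᵥ ψ = 1) :
    vecMulVec ψ w * vecMulVec ψ w = vecMulVec ψ w := by
  have h2 := aux_vecMulVec_mul_mul ψ w 1
  rw [mul_one, aux_trace_vecMulVec, h, one_smul] at h2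
  exact h2

lemma aux_neg_trace_comm_mul (ρ A B : Matrix d d ℂ) (hρ : ρ * ρ = ρ)
    (hpure : ∀ X : Matrix d d ℂ, ρ * X * ρ = Matrix.trace (ρ * X) • ρ) :
    -(Matrix.trace (mComm A ρ * mComm B ρ))
      = Matrix.trace (ρ * (A * B)) + Matrix.trace (ρ * (B * A))
        - 2 * (Matrix.trace (ρ * A) * Matrix.trace (ρ * B)) := by
  have t1 : Matrix.trace (A * ρ * (B * ρ)) = Matrix.trace (ρ * A) * Matrix.trace (ρ * B) := by
    rw [show A * ρ * (B * ρ) = A * (ρ * B * ρ) from by noncomm_ring, hpure B,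
      Matrix.mul_smul, Matrix.trace_smul, smul_eq_mul, Matrix.trace_mul_comm A ρ]
    ring
  have t4 : Matrix.trace (ρ * A * (ρ * B)) = Matrix.trace (ρ * A) * Matrix.trace (ρ * B) := by
    rw [show ρ * A * (ρ * B) = (ρ * A * ρ) * B from by noncomm_ring, hpure A,
      Matrix.smul_mul, Matrix.trace_smul, smul_eq_mul]
  have t2 : Matrix.trace (A * ρ * (ρ * B)) = Matrix.trace (ρ * (B * A)) := by
    rw [show A * ρ * (ρ * B) = A * ρ * B from by rw [show A * ρ * (ρ * B) = A * (ρ * ρ) * B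
      from by noncomm_ring, hρ]]
    calc Matrix.trace (A * ρ * B) = Matrix.trace (B * (A * ρ)) := Matrix.trace_mul_comm _ _
      _ = Matrix.trace (B * A * ρ) := by rw [Matrix.mul_assoc]
      _ = Matrix.trace (ρ * (B * A)) := Matrix.trace_mul_comm _ _
  have t3 : Matrix.trace (ρ * A * (B * ρ)) = Matrix.trace (ρ * (A * B)) := by
    rw [show ρ * A * (B * ρ) = ρ * (A * B) * ρ from by noncomm_ring]
    calc Matrix.trace (ρ * (A * B) * ρ) = Matrix.trace (ρ * (ρ * (A * B))) :=
          Matrix.trace_mul_comm _ _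
      _ = Matrix.trace (ρ * ρ * (A * B)) := by rw [Matrix.mul_assoc]
      _ = Matrix.trace (ρ * (A * B)) := by rw [hρ]
  have expand : mComm A ρ * mComm B ρ
      = A * ρ * (B * ρ) - A * ρ * (ρ * B) - ρ * A * (B * ρ) + ρ * A * (ρ * B) := by
    simp only [mComm]; noncomm_ring
  rw [expand, Matrix.trace_add, Matrix.trace_sub, Matrix.trace_sub, t1, t2, t3, t4]
  ring

lemma aux_tPauli (a : Fin 4) :
    Matrix.trace (pauliBasis a) = if a = 3 then ((Real.sqrt 2 : ℝ) : ℂ) else 0 := by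
  fin_cases a <;>
    simp [pauliBasis, sigmaX, sigmaY, sigmaZ, Matrix.trace_fin_two, Matrix.one_fin_two] <;>
    field_simp <;>
    rw [← Complex.ofReal_pow, Real.sq_sqrt (by norm_num)] <;> norm_num

lemma aux_TPauli (a b : Fin 4) :
    Matrix.trace (pauliBasis a * pauliBasis b) = if a = b then 1 else 0 := by
  fin_cases a <;> fin_cases b <;>
    simp [pauliBasis, sigmaX, sigmaY, sigmaZ, Matrix.smul_mul, Matrix.mul_smul,
      Matrix.trace_fin_two, Matrix.mul_apply, Fin.sum_univ_two, Matrix.one_fin_two,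
      Complex.ext_iff] <;>
    nlinarith [aux_sqrt2_self]

end AuxLemmas

/-- Let `ψ` be a pure state of `N ≥ 2` qubits such that every
single-site reduced density matrix equals `I/2` (encoded as
`tr(ρ · (B ⊗ I)) = tr(B)/2` for all one-site observables `B`) and every two-site
reduced density matrix equals `I/4` (encoded as
`tr(ρ · (B ⊗ C ⊗ I)) = tr(B)tr(C)/4`). Then, with the normalized-Pauli local
observable set, the commutation matrix `γ_C(|ψ⟩⟨ψ|, M)` is diagonal, with diagonal
entry `1` for every Pauli observable and `0` for every identity observable;
consequently `Γ_C(|ψ⟩⟨ψ|) = 1`. -/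
theorem maximally_entangled_chaos_gammaC_eq_one
    (N : ℕ) (hN : 2 ≤ N)
    (ψ : (Fin N → Fin 2) → ℂ) (hψ : star ψ ⬝ᵥ ψ = 1)
    (h1 : ∀ i : Fin N, ∀ B : Matrix (Fin 2) (Fin 2) ℂ,
      Matrix.trace (vecMulVec ψ (star ψ) * localOp N i B) = Matrix.trace B / 2)
    (h2 : ∀ i j : Fin N, i ≠ j → ∀ B C : Matrix (Fin 2) (Fin 2) ℂ,
      Matrix.trace (vecMulVec ψ (star ψ) * (localOp N i B * localOp N j C))
        = Matrix.trace B * Matrix.trace C / 4) :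
    (∀ μ ν : Fin N × Fin 4, μ ≠ ν →
      gammaC (vecMulVec ψ (star ψ)) (pauliObs N) μ ν = 0) ∧
    (∀ μ : Fin N × Fin 4,
      gammaC (vecMulVec ψ (star ψ)) (pauliObs N) μ μ
        = if μ.2 = 3 then 0 else 1) ∧
    maxEig (gammaC (vecMulVec ψ (star ψ)) (pauliObs N)) = 1 := by
    classical
  set ρ := vecMulVec ψ (star ψ) with hρdef
  have hρ : ρ * ρ = ρ := aux_vecMulVec_sq ψ (star ψ) hψ
  have hpure : ∀ X, ρ * X * ρ = Matrix.trace (ρ * X) • ρ := aux_vecMulVec_mul_mul ψ (star ψ)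
  have key : ∀ μ ν : Fin N × Fin 4,
      gammaC ρ (pauliObs N) μ ν
        = if μ = ν then (if μ.2 = 3 then (0:ℝ) else 1) else 0 := by
    rintro ⟨i, a⟩ ⟨j, b⟩
    have hg : gammaC ρ (pauliObs N) (i, a) (j, b)
        = (Matrix.trace (ρ * (pauliObs N (i,a) * pauliObs N (j,b)))
            + Matrix.trace (ρ * (pauliObs N (j,b) * pauliObs N (i,a)))
            - 2 * (Matrix.trace (ρ * pauliObs N (i,a))
                * Matrix.trace (ρ * pauliObs N (j,b)))).re := by
      unfold gammaC
      rw [aux_neg_trace_comm_mul _ _ _ hρ hpure]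
    have hMa : pauliObs N (i,a) = localOp N i (pauliBasis a) := rfl
    have hMb : pauliObs N (j,b) = localOp N j (pauliBasis b) := rfl
    by_cases hij : i = j
    · subst hij
      rw [hg, hMa, hMb, aux_localOp_mul, aux_localOp_mul,
        h1 i (pauliBasis a * pauliBasis b), h1 i (pauliBasis b * pauliBasis a),
        h1 i (pauliBasis a), h1 i (pauliBasis b),
        aux_TPauli, aux_TPauli, aux_tPauli, aux_tPauli]
      rcases eq_or_ne a b with rfl | hab
      · rcases eq_or_ne a 3 with rfl | ha3
        · have hh : ((Real.sqrt 2 : ℝ):ℂ)/2 * (((Real.sqrt 2 : ℝ):ℂ)/2) = 1/2 := by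
            rw [div_mul_div_comm, aux_sqrt2_sq]; norm_num
          simp only [if_pos rfl, hh]
          norm_num
          nlinarith [aux_sqrt2_self]
        · simp only [if_pos rfl, if_neg ha3]
          norm_num
      · have hba : b ≠ a := hab.symm
        rcases eq_or_ne a 3 with rfl | ha3
        · have hb3 : b ≠ 3 := hba
          simp [hab, hba, hb3, Prod.ext_iff]
        · simp [hab, hba, ha3, Prod.ext_iff]
    · rw [hg, hMa, hMb, h2 i j hij (pauliBasis a) (pauliBasis b),
        h2 j i (Ne.symm hij) (pauliBasis b) (pauliBasis a),
        h1 i (pauliBasis a), h1 j (pauliBasis b)]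
      rw [if_neg (fun h => hij ((Prod.mk.injEq i a j b ▸ h).1))]
      have : (Matrix.trace (pauliBasis a) * Matrix.trace (pauliBasis b) / 4
            + Matrix.trace (pauliBasis b) * Matrix.trace (pauliBasis a) / 4
            - 2 * (Matrix.trace (pauliBasis a) / 2 * (Matrix.trace (pauliBasis b) / 2)))
          = 0 := by ring
      rw [this]
      simp
  refine ⟨fun μ ν hμν => by rw [key, if_neg hμν], fun μ => by rw [key, if_pos rfl], ?_⟩
  -- the largest eigenvalue
  have hmul : ∀ (v : Fin N × Fin 4 → ℝ) (μ : Fin N × Fin 4),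
      (gammaC ρ (pauliObs N)).mulVec v μ
        = (if μ.2 = 3 then (0:ℝ) else 1) * v μ := by
    intro v μ
    have hterm : ∀ ν, gammaC ρ (pauliObs N) μ ν * v ν
        = if μ = ν then (if μ.2 = 3 then (0:ℝ) else 1) * v ν else 0 := fun ν => by
      rw [key μ ν, ite_mul, zero_mul]
    simp only [Matrix.mulVec, dotProduct]
    rw [Finset.sum_congr rfl fun ν _ => hterm ν]
    exact (Finset.sum_ite_eq Finset.univ μ
      (fun ν => (if μ.2 = 3 then (0:ℝ) else 1) * v ν)).trans (if_pos (Finset.mem_univ μ))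
  set S : Set ℝ := {c : ℝ | ∃ v : Fin N × Fin 4 → ℝ, v ≠ 0 ∧
      (gammaC ρ (pauliObs N)).mulVec v = c • v} with hS
  have hub : ∀ c ∈ S, c ≤ 1 := by
    rintro c ⟨v, hv0, hGv⟩
    obtain ⟨μ, hμ⟩ := Function.ne_iff.mp hv0
    have hμ' : v μ ≠ 0 := hμ
    have := congrFun hGv μ
    rw [hmul] at this
    have hc : c = if μ.2 = 3 then (0:ℝ) else 1 := by
      have := mul_right_cancel₀ hμ' (this.trans (Pi.smul_apply c v μ ▸ rfl) :
        (if μ.2 = 3 then (0:ℝ) else 1) * v μ = c * v μ)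
      exact this.symm
    rw [hc]
    split <;> norm_num
  have h1S : (1:ℝ) ∈ S := by
    refine ⟨Pi.single (⟨0, by omega⟩, (0:Fin 4)) 1, ?_, ?_⟩
    · intro h
      have := congrFun h (⟨0, by omega⟩, (0:Fin 4))
      simp [Pi.single_eq_same] at this
    · funext μ
      rw [hmul]
      rcases eq_or_ne μ (⟨0, by omega⟩, (0:Fin 4)) with rfl | hne
      · simp
      · rw [Pi.single_eq_of_ne hne]
        simp [Pi.single_eq_of_ne hne]
  unfold maxEig
  rw [← hS]
  exact le_antisymm (csSup_le ⟨1, h1S⟩ hub) (le_csSup ⟨1, hub⟩ h1S)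
end
end
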